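/- Any irreducible Z_+-module over a Z_+-ring A of finite rank over Z has finite rank over Z; moreover, setting b = Σ_{b_i ∈ B} b_i and writing b² = Σ_i n_i b_i with N = max_i n_i, every irreducible Z_+-module M with basis {m_i}_{i∈I} satisfies: the minimal value d = min_{i∈I} d_i of the coefficient sums d_i (where b·m_i = Σ_k d_i^k m_k and d_i = Σ_k d_i^k) satisfies d ≤ N. -/

import Mathlib

open scoped BigOperators

/-- Expansion of a ℤ-linear functional along a basis. -/
lemma aux_lin_expand {κ Mc : Type} [AddCommGroup Mc] (m : Module.Basis κ ℤ Mc)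
    (f : Mc →ₗ[ℤ] ℤ) (x : Mc) :
    f x = (m.repr x).sum fun p c => c * f (m p) := by
  conv_lhs => rw [← m.linearCombination_repr x]
  rw [Finsupp.linearCombination_apply, map_finsuppSum]
  exact Finsupp.sum_congr fun p _ => by rw [map_zsmul, smul_eq_mul]

/-- Let A be a ℤ₊-ring of finite rank over ℤ (ring with a finite ℤ-basis
{b i} whose structure constants are nonnegative). Let M be an irreducible ℤ₊-module over A
with basis {m j} (structure constants of the action nonnegative).  Set b = Σᵢ bᵢ, write
b² = Σ nᵢ bᵢ and let N be an upper bound for the nᵢ.  For j in the basis of M let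
d j be the sum of the coefficients of b • m j.  Then M has finite rank over ℤ, and the
minimal value of d (attained at some j₀) satisfies d j₀ ≤ N. -/
theorem irreducible_ZPlus_module_finite_rank_and_bound
    {A : Type} [Ring A] {ι : Type} [Fintype ι] (b : Module.Basis ι ℤ A)
    (hring : ∀ i j k, 0 ≤ b.repr (b i * b j) k)
    {Mc : Type} [AddCommGroup Mc] [Module A Mc]
    {κ : Type} (m : Module.Basis κ ℤ Mc)
    (hmod : ∀ (i : ι) (j k : κ), 0 ≤ m.repr (b i • m j) k)
    (hne : Nonempty κ)
    (hirr : ∀ J : Set κ,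
      (∀ (a : A) (x : Mc), x ∈ Submodule.span ℤ (⇑m '' J) →
        a • x ∈ Submodule.span ℤ (⇑m '' J)) → J = ∅ ∨ J = Set.univ)
    (N : ℤ)
    (hN : ∀ i, (b.repr ((∑ i, b i) * (∑ i, b i))) i ≤ N)
    (d : κ → ℤ)
    (hd : ∀ j, d j = (m.repr ((∑ i, b i) • m j)).sum fun _ v => v) :
    Finite κ ∧ ∀ j₀ : κ, (∀ j, d j₀ ≤ d j) → d j₀ ≤ N := by
  classical
  set B : A := ∑ i, b i with hB
  -- expansion of a • m j along the basis of A
  have hsmul_expand : ∀ (a : A) (j : κ), a • m j = ∑ i, b.repr a i • (b i • m j) := by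
    intro a j
    conv_lhs => rw [← b.sum_repr a]
    rw [Finset.sum_smul]
    simp only [smul_assoc]
  have E1 : ∀ (a : A) (j k : κ),
      m.repr (a • m j) k = ∑ i, b.repr a i * m.repr (b i • m j) k := by
    intro a j k
    rw [hsmul_expand a j, map_sum, Finset.sum_apply']
    simp [smul_eq_mul]
  -- the linear functional x ↦ m.repr (a • x) r
  have E2 : ∀ (a : A) (x : Mc) (r : κ),
      m.repr (a • x) r = (m.repr x).sum fun p c => c * m.repr (a • m p) r := by
    intro a x r
    exact aux_lin_expand m
      ((Finsupp.lapply r) ∘ₗ (m.repr : Mc →ₗ[ℤ] (κ →₀ ℤ)) ∘ₗ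
        (DistribMulAction.toLinearMap ℤ Mc a)) x
  -- Part 1 : finiteness
  obtain ⟨j₁⟩ := hne
  set J : Set κ := {j₁} ∪ ⋃ i, ↑(m.repr (b i • m j₁)).support with hJdef
  have hJfin : J.Finite :=
    (Set.finite_singleton j₁).union
      (Set.finite_iUnion fun i => (m.repr (b i • m j₁)).support.finite_toSet)
  have hrj : ∀ r, r ∉ J → ∀ s : ι, m.repr (b s • m j₁) r = 0 := by
    intro r hr s
    by_contra h
    exact hr (Or.inr (Set.mem_iUnion.2 ⟨s, Finsupp.mem_support_iff.2 h⟩))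
  have key : ∀ k ∈ J, ∀ (l : ι) (r : κ), r ∉ J → m.repr (b l • m k) r = 0 := by
    intro k hk l r hr
    rcases hk with hk | hk
    · rcases hk with rfl
      exact hrj r hr l
    · obtain ⟨i, hk'⟩ := Set.mem_iUnion.1 hk
      have hk'' : k ∈ (m.repr (b i • m j₁)).support := hk'
      have hzero : m.repr ((b l * b i) • m j₁) r = 0 := by
        rw [E1]
        exact Finset.sum_eq_zero fun s _ => by rw [hrj r hr s, mul_zero]
      rw [mul_smul, E2, Finsupp.sum] at hzero
      have h2 := (Finset.sum_eq_zero_iff_of_nonneg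
        (fun p _ => mul_nonneg (hmod i j₁ p) (hmod l p r))).mp hzero k hk''
      exact (mul_eq_zero.mp h2).resolve_left (Finsupp.mem_support_iff.mp hk'')
  have hbk : ∀ (l : ι) (k : κ), k ∈ J → b l • m k ∈ Submodule.span ℤ (⇑m '' J) := by
    intro l k hk
    refine (Module.Basis.mem_span_image m).2 ?_
    intro r hr
    by_contra hrJ
    exact Finsupp.mem_support_iff.mp hr (key k hk l r hrJ)
  have hinv : ∀ (a : A) (x : Mc), x ∈ Submodule.span ℤ (⇑m '' J) →
      a • x ∈ Submodule.span ℤ (⇑m '' J) := by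
    intro a x hx
    suffices h : Submodule.span ℤ (⇑m '' J) ≤
        (Submodule.span ℤ (⇑m '' J)).comap (DistribMulAction.toLinearMap ℤ Mc a) from h hx
    rw [Submodule.span_le]
    rintro _ ⟨k, hk, rfl⟩
    have : a • m k ∈ Submodule.span ℤ (⇑m '' J) := by
      rw [hsmul_expand a k]
      exact Submodule.sum_mem _ fun i _ => Submodule.smul_mem _ _ (hbk i k hk)
    exact this
  have hJuniv : J = Set.univ := by
    rcases hirr J hinv with h | h
    · exact absurd h (Set.nonempty_iff_ne_empty.1 ⟨j₁, Or.inl rfl⟩)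
    · exact h
  have hfin : Finite κ := Set.finite_univ_iff.mp (hJuniv ▸ hJfin)
  refine ⟨hfin, ?_⟩
  haveI := hfin
  haveI := Fintype.ofFinite κ
  -- Part 2 : the bound
  intro j₀ hmin
  -- the coefficient-sum functional
  set D : Mc →ₗ[ℤ] ℤ :=
    (Finsupp.linearCombination ℤ (fun _ : κ => (1:ℤ))) ∘ₗ (m.repr : Mc →ₗ[ℤ] (κ →₀ ℤ))
    with hDdef
  have hD : ∀ x : Mc, D x = ∑ k, m.repr x k := by
    intro x
    rw [hDdef]
    simp only [LinearMap.comp_apply, LinearEquiv.coe_coe, Finsupp.linearCombination_apply]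
    rw [Finsupp.sum_fintype _ _ (fun k => by simp)]
    simp
  have hdD : ∀ j, d j = D (B • m j) := by
    intro j
    rw [hd j, hD, Finsupp.sum_fintype _ _ (fun k => rfl)]
  -- coefficients of B • m j are nonneg
  have hBm : ∀ (j k : κ), m.repr (B • m j) k = ∑ i, m.repr (b i • m j) k := by
    intro j k
    rw [hB, Finset.sum_smul, map_sum, Finset.sum_apply']
  have hBnn : ∀ (j k : κ), 0 ≤ m.repr (B • m j) k := by
    intro j k
    rw [hBm]
    exact Finset.sum_nonneg fun i _ => hmod i j k
  have htnn : ∀ i : ι, 0 ≤ D (b i • m j₀) := by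
    intro i
    rw [hD]
    exact Finset.sum_nonneg fun k _ => hmod i j₀ k
  have hd0 : 0 ≤ d j₀ := by
    rw [hdD, hD]
    exact Finset.sum_nonneg fun k _ => hBnn j₀ k
  -- expand D (B • y) along basis of M
  have E3 : ∀ y : Mc, D (B • y) = ∑ p, m.repr y p * D (B • m p) := by
    intro y
    have := aux_lin_expand m (D ∘ₗ (DistribSMul.toLinearMap ℤ Mc B)) y
    simp only [LinearMap.comp_apply, DistribSMul.toLinearMap_apply] at this
    rw [this, Finsupp.sum_fintype _ _ (fun p => by simp)]
  -- lower bound for T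
  have hT1 : d j₀ * d j₀ ≤ D ((B * B) • m j₀) := by
    rw [mul_smul, E3]
    have : ∑ p, m.repr (B • m j₀) p * D (B • m p)
        ≥ ∑ p, m.repr (B • m j₀) p * d j₀ := by
      apply Finset.sum_le_sum
      intro p _
      rw [← hdD p]
      exact mul_le_mul_of_nonneg_left (hmin p) (hBnn j₀ p)
    refine le_trans ?_ this
    rw [← Finset.sum_mul]
    rw [hdD j₀, hD]
  -- upper bound for T
  have hT2 : D ((B * B) • m j₀) ≤ N * d j₀ := by
    rw [hsmul_expand (B * B) j₀, map_sum]
    have h1 : ∑ i, D (b.repr (B * B) i • (b i • m j₀))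
        = ∑ i, b.repr (B * B) i * D (b i • m j₀) := by
      refine Finset.sum_congr rfl fun i _ => ?_
      rw [map_zsmul, smul_eq_mul]
    rw [h1]
    have h2 : ∑ i, b.repr (B * B) i * D (b i • m j₀)
        ≤ ∑ i, N * D (b i • m j₀) := by
      apply Finset.sum_le_sum
      intro i _
      exact mul_le_mul_of_nonneg_right (hN i) (htnn i)
    refine le_trans h2 ?_
    rw [← Finset.mul_sum, ← map_sum, hdD j₀]
    have : ∑ i, b i • m j₀ = B • m j₀ := by rw [hB, Finset.sum_smul]
    rw [this]
  have hkey : d j₀ * d j₀ ≤ N * d j₀ := le_trans hT1 hT2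
  rcases lt_or_eq_of_le hd0 with hpos | hzero
  · exact le_of_mul_le_mul_right (by linarith [hkey]) hpos
  · -- d j₀ = 0 ; show 0 ≤ N
    rw [← hzero]
    rcases isEmpty_or_nonempty ι with hι | hι
    · exfalso
      have h1 : (1 : A) = 0 := by
        have := b.sum_repr (1 : A)
        simpa using this.symm
      have : m j₀ = 0 := by
        calc m j₀ = (1 : A) • m j₀ := (one_smul A (m j₀)).symm
          _ = (0 : A) • m j₀ := by rw [h1]
          _ = 0 := zero_smul A (m j₀)
      exact m.ne_zero j₀ this
    · obtain ⟨i⟩ := hι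
      refine le_trans ?_ (hN i)
      rw [hB, Finset.sum_mul_sum, map_sum, Finset.sum_apply']
      refine Finset.sum_nonneg fun p _ => ?_
      rw [map_sum, Finset.sum_apply']
      exact Finset.sum_nonneg fun q _ => hring p q i
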